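/- For any nonnegative random variable Y and any r > 2, one has (1/2)·(E[Y²])^{1/2} ≤ ∫₀^∞ √(P(Y > t)) dt ≤ (r/(r-2))·(E[Y^r])^{1/r}. -/

import Mathlib

open MeasureTheory Set
open scoped ENNReal

/-- For a nonnegative random variable `Y` with finite `r`-th moment, `r > 2`:
`(1/2)‖Y‖₂ ≤ ‖Y‖_{2,1} ≤ (r/(r-2))‖Y‖_r`, where `‖Y‖_{2,1} = ∫₀^∞ √(P(Y > t)) dt`. -/
theorem stmt0 {Ω : Type*} [MeasurableSpace Ω] (μ : Measure Ω) [IsProbabilityMeasure μ]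
    (Y : Ω → ℝ) (hY : Measurable Y) (hpos : ∀ ω, 0 ≤ Y ω) (r : ℝ) (hr : 2 < r)
    (hint : Integrable (fun ω => Y ω ^ r) μ) :
    (1 / 2) * (∫ ω, Y ω ^ (2 : ℝ) ∂μ) ^ ((1 : ℝ) / 2)
        ≤ ∫ t in Ioi (0 : ℝ), Real.sqrt ((μ {ω | Y ω > t}).toReal)
      ∧ ∫ t in Ioi (0 : ℝ), Real.sqrt ((μ {ω | Y ω > t}).toReal)
        ≤ (r / (r - 2)) * (∫ ω, Y ω ^ r ∂μ) ^ (1 / r) := by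
  have hrpos : (0 : ℝ) < r := by linarith
  set G : ℝ → ℝ := fun t => (μ {ω | t < Y ω}).toReal with hGdef
  set g : ℝ → ℝ := fun t => Real.sqrt (G t) with hgdef
  set M : ℝ := ∫ ω, Y ω ^ r ∂μ with hMdef
  have hMnonneg : 0 ≤ M := integral_nonneg fun ω => Real.rpow_nonneg (hpos ω) r
  have hGanti : Antitone G := by
    intro s t hst
    exact ENNReal.toReal_mono (measure_ne_top μ _)
      (measure_mono fun ω hω => lt_of_le_of_lt hst hω)
  have hganti : Antitone g := fun s t hst => Real.sqrt_le_sqrt (hGanti hst)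
  have hgm : Measurable g := hganti.measurable
  have hGnonneg : ∀ t, 0 ≤ G t := fun t => ENNReal.toReal_nonneg
  have hgnonneg : ∀ t, 0 ≤ g t := fun t => Real.sqrt_nonneg _
  have hGle1 : ∀ t, G t ≤ 1 := by
    intro t
    simpa using ENNReal.toReal_mono (by simp) (prob_le_one (μ := μ) (s := {ω | t < Y ω}))
  have hgle1 : ∀ t, g t ≤ 1 := fun t => Real.sqrt_le_one.mpr (hGle1 t)
  -- Markov's inequality
  have markov : ∀ t : ℝ, 0 < t → G t ≤ M / t ^ r := by
    intro t ht
    have htr : (0 : ℝ) < t ^ r := Real.rpow_pos_of_pos ht r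
    have h1 : {ω | t < Y ω} ⊆ {ω | t ^ r ≤ (fun ω => Y ω ^ r) ω} := by
      intro ω hω
      exact Real.rpow_le_rpow ht.le (le_of_lt hω) hrpos.le
    have h2 := mul_meas_ge_le_integral_of_nonneg
      (Filter.Eventually.of_forall fun ω => Real.rpow_nonneg (hpos ω) r) hint (t ^ r)
    have h3 : G t ≤ (μ {ω | t ^ r ≤ (fun ω => Y ω ^ r) ω}).toReal :=
      ENNReal.toReal_mono (measure_ne_top _ _) (measure_mono h1)
    rw [le_div_iff₀ htr]
    calc G t * t ^ r ≤ (μ {ω | t ^ r ≤ (fun ω => Y ω ^ r) ω}).toReal * t ^ r := by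
          exact mul_le_mul_of_nonneg_right h3 htr.le
    _ ≤ M := by rw [mul_comm]; exact h2
  -- pointwise bound on g for positive t
  have key_bound : ∀ t : ℝ, 0 < t → g t ≤ Real.sqrt M * t ^ (-(r / 2)) := by
    intro t ht
    have h1 : g t ≤ Real.sqrt (M / t ^ r) := Real.sqrt_le_sqrt (markov t ht)
    have h2 : Real.sqrt (M / t ^ r) = Real.sqrt M * t ^ (-(r / 2)) := by
      rw [Real.sqrt_div hMnonneg, Real.sqrt_eq_rpow (t ^ r), ← Real.rpow_mul ht.le,
        div_eq_mul_inv, ← Real.rpow_neg ht.le]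
      ring_nf
    rw [← h2]; exact h1
  -- integrability of g
  have hgInt1 : ∀ c : ℝ, IntegrableOn g (Ioc 0 c) := by
    intro c
    refine Integrable.mono' (g := fun _ : ℝ => (1 : ℝ))
      ((integrableOn_const_iff).mpr (Or.inr measure_Ioc_lt_top))
      hgm.aestronglyMeasurable.restrict ?_
    filter_upwards with t
    rw [Real.norm_eq_abs, abs_of_nonneg (hgnonneg t)]
    exact hgle1 t
  have hgInt2 : ∀ c : ℝ, 0 < c → IntegrableOn g (Ioi c) := by
    intro c hc
    refine Integrable.mono'
      ((integrableOn_Ioi_rpow_of_lt (show -(r / 2) < -1 by linarith) hc).const_mul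
        (Real.sqrt M)) hgm.aestronglyMeasurable.restrict ?_
    filter_upwards [ae_restrict_mem measurableSet_Ioi] with t ht
    rw [Real.norm_eq_abs, abs_of_nonneg (hgnonneg t)]
    exact key_bound t (hc.trans ht)
  have hgInt : IntegrableOn g (Ioi 0) := by
    have := (hgInt1 1).union (hgInt2 1 one_pos)
    rwa [Ioc_union_Ioi_eq_Ioi zero_le_one] at this
  set N : ℝ := ∫ t in Ioi (0 : ℝ), g t with hNdef
  have hNnonneg : 0 ≤ N := setIntegral_nonneg measurableSet_Ioi fun t _ => hgnonneg t
  -- key pointwise bound : t * g t ≤ N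
  have hkey : ∀ t : ℝ, 0 < t → t * g t ≤ N := by
    intro t ht
    have h1 : t * g t = ∫ _ in Ioc (0 : ℝ) t, g t := by
      rw [setIntegral_const]
      simp [Real.volume_Ioc, ht.le]
    rw [h1]
    calc (∫ _ in Ioc (0 : ℝ) t, g t) ≤ ∫ s in Ioc (0 : ℝ) t, g s := by
          refine setIntegral_mono_on ((integrableOn_const_iff).mpr (Or.inr measure_Ioc_lt_top))
            (hgInt1 t) measurableSet_Ioc fun s hs => hganti hs.2
    _ ≤ N := by
          refine setIntegral_mono_set hgInt (Filter.Eventually.of_forall fun s => hgnonneg s)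
            (HasSubset.Subset.eventuallyLE Ioc_subset_Ioi_self)
  have hNeq : (∫ t in Ioi (0 : ℝ), Real.sqrt ((μ {ω | Y ω > t}).toReal)) = N := rfl
  constructor
  · -- lower bound
    set gE : ℝ → ℝ≥0∞ := fun t => μ {ω | t < Y ω} ^ (1 / 2 : ℝ) with hgEdef
    have hgE_ne_top : ∀ t, gE t ≠ ∞ := fun t =>
      ENNReal.rpow_ne_top_of_nonneg (by norm_num) (measure_ne_top μ _)
    have hgE_eq : ∀ t, ENNReal.ofReal (g t) = gE t := by
      intro t
      have : g t = (gE t).toReal := by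
        simp only [hgdef, hgEdef, hGdef]
        rw [Real.sqrt_eq_rpow]
        exact ENNReal.toReal_rpow _ _
      rw [this, ENNReal.ofReal_toReal (hgE_ne_top t)]
    have hofN : ENNReal.ofReal N = ∫⁻ t in Ioi (0 : ℝ), gE t := by
      rw [hNdef, ofReal_integral_eq_lintegral_ofReal hgInt
        (Filter.Eventually.of_forall fun t => hgnonneg t)]
      exact lintegral_congr fun t => hgE_eq t
    have layer := lintegral_rpow_eq_lintegral_meas_lt_mul μ
      (Filter.Eventually.of_forall hpos) hY.aemeasurable (show (0 : ℝ) < 2 by norm_num)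
    have h21 : (2 : ℝ) - 1 = 1 := by norm_num
    simp only [h21, Real.rpow_one] at layer
    have hpt : ∀ t ∈ Ioi (0 : ℝ),
        μ {ω | t < Y ω} * ENNReal.ofReal t ≤ gE t * ENNReal.ofReal N := by
      intro t ht
      have hsplit : gE t * gE t = μ {ω | t < Y ω} := by
        rw [hgEdef, ← ENNReal.rpow_add_of_nonneg _ _ (by norm_num) (by norm_num)]
        norm_num
      rw [← hsplit, mul_assoc]
      refine mul_le_mul_right ?_ (gE t)
      rw [← hgE_eq t, ← ENNReal.ofReal_mul (hgnonneg t)]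
      refine ENNReal.ofReal_le_ofReal ?_
      rw [mul_comm]
      exact hkey t ht
    have hlin : (∫⁻ t in Ioi (0 : ℝ), μ {ω | t < Y ω} * ENNReal.ofReal t)
        ≤ ENNReal.ofReal N * ENNReal.ofReal N := by
      calc (∫⁻ t in Ioi (0 : ℝ), μ {ω | t < Y ω} * ENNReal.ofReal t)
          ≤ ∫⁻ t in Ioi (0 : ℝ), gE t * ENNReal.ofReal N := by
            refine lintegral_mono_ae ?_
            filter_upwards [ae_restrict_mem measurableSet_Ioi] with t ht using hpt t ht
      _ = (∫⁻ t in Ioi (0 : ℝ), gE t) * ENNReal.ofReal N :=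
            lintegral_mul_const' _ _ ENNReal.ofReal_ne_top
      _ = ENNReal.ofReal N * ENNReal.ofReal N := by rw [← hofN]
    have hEnn : (0 : ℝ) ≤ (2 * N) ^ (2 : ℝ) := Real.rpow_nonneg (by linarith) _
    have hEle : (∫ ω, Y ω ^ (2 : ℝ) ∂μ) ≤ (2 * N) ^ (2 : ℝ) := by
      have hm2 : Measurable fun ω => Y ω ^ (2 : ℝ) := hY.pow measurable_const
      rw [integral_eq_lintegral_of_nonneg_ae
        (Filter.Eventually.of_forall fun ω => Real.rpow_nonneg (hpos ω) 2)
        hm2.aestronglyMeasurable]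
      refine ENNReal.toReal_le_of_le_ofReal hEnn ?_
      rw [layer]
      calc ENNReal.ofReal 2 * ∫⁻ t in Ioi (0 : ℝ), μ {ω | t < Y ω} * ENNReal.ofReal t
          ≤ ENNReal.ofReal 2 * (ENNReal.ofReal N * ENNReal.ofReal N) :=
            mul_le_mul_right hlin _
      _ = ENNReal.ofReal (2 * (N * N)) := by
            rw [ENNReal.ofReal_mul (by norm_num), ENNReal.ofReal_mul hNnonneg]
      _ ≤ ENNReal.ofReal ((2 * N) ^ (2 : ℝ)) := by
            refine ENNReal.ofReal_le_ofReal ?_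
            rw [Real.rpow_two]
            nlinarith [hNnonneg]
    have h2 : (∫ ω, Y ω ^ (2 : ℝ) ∂μ) ^ ((1 : ℝ) / 2) ≤ 2 * N := by
      have hb : ((2 * N) ^ (2 : ℝ)) ^ ((1 : ℝ) / 2) = 2 * N := by
        rw [← Real.rpow_mul (by linarith : (0 : ℝ) ≤ 2 * N)]
        norm_num
      calc (∫ ω, Y ω ^ (2 : ℝ) ∂μ) ^ ((1 : ℝ) / 2)
          ≤ ((2 * N) ^ (2 : ℝ)) ^ ((1 : ℝ) / 2) :=
            Real.rpow_le_rpow (integral_nonneg fun ω => Real.rpow_nonneg (hpos ω) 2)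
              hEle (by norm_num)
      _ = 2 * N := hb
    linarith
  · -- upper bound
    rcases eq_or_lt_of_le hMnonneg with hM0 | hMpos
    · have hN0 : N = 0 := by
        rw [hNdef]
        have hg0 : EqOn g (fun _ => (0 : ℝ)) (Ioi 0) := by
          intro t ht
          have h := markov t ht
          rw [← hM0, zero_div] at h
          have hG0 : G t = 0 := le_antisymm h (hGnonneg t)
          simp [hgdef, hG0]
        rw [setIntegral_congr_fun measurableSet_Ioi hg0]
        simp
      rw [hN0, ← hM0, Real.zero_rpow (by positivity : (1 : ℝ) / r ≠ 0), mul_zero]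
    · set t₀ : ℝ := M ^ (1 / r : ℝ) with ht₀def
      have ht₀ : 0 < t₀ := Real.rpow_pos_of_pos hMpos _
      have hr2 : (0 : ℝ) < r - 2 := by linarith
      have hsqrtM : Real.sqrt M = t₀ ^ (r / 2 : ℝ) := by
        rw [ht₀def, ← Real.rpow_mul hMnonneg, Real.sqrt_eq_rpow]
        congr 1
        field_simp
      have hsplit : N = (∫ t in Ioc (0 : ℝ) t₀, g t) + ∫ t in Ioi t₀, g t := by
        rw [hNdef, ← Ioc_union_Ioi_eq_Ioi ht₀.le,
          setIntegral_union (Ioc_disjoint_Ioi le_rfl) measurableSet_Ioi (hgInt1 t₀)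
            (hgInt2 t₀ ht₀)]
      have hp1 : (∫ t in Ioc (0 : ℝ) t₀, g t) ≤ t₀ := by
        calc (∫ t in Ioc (0 : ℝ) t₀, g t) ≤ ∫ _ in Ioc (0 : ℝ) t₀, (1 : ℝ) :=
              setIntegral_mono_on (hgInt1 t₀)
                ((integrableOn_const_iff).mpr (Or.inr measure_Ioc_lt_top))
                measurableSet_Ioc fun t _ => hgle1 t
        _ = t₀ := by simp [Real.volume_Ioc, ht₀.le]
      have hexp_ne : -(r / 2) + 1 ≠ 0 := by
        intro h
        have : r = 2 := by linarith
        linarith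
      have hp2 : (∫ t in Ioi t₀, g t) ≤ t₀ * (2 / (r - 2)) := by
        have hb : (∫ t in Ioi t₀, g t)
            ≤ ∫ t in Ioi t₀, Real.sqrt M * t ^ (-(r / 2)) := by
          refine setIntegral_mono_on (hgInt2 t₀ ht₀)
            ((integrableOn_Ioi_rpow_of_lt (by linarith) ht₀).const_mul (Real.sqrt M))
            measurableSet_Ioi fun t ht => key_bound t (ht₀.trans ht)
        have hc : (∫ t in Ioi t₀, Real.sqrt M * t ^ (-(r / 2)))
            = Real.sqrt M * (-t₀ ^ (-(r / 2) + 1) / (-(r / 2) + 1)) := by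
          rw [integral_const_mul, integral_Ioi_rpow_of_lt (by linarith) ht₀]
        have h1 : t₀ ^ (r / 2 : ℝ) * t₀ ^ (-(r / 2) + 1 : ℝ) = t₀ := by
          rw [← Real.rpow_add ht₀]
          norm_num
        have hq : (-1 : ℝ) / (-(r / 2) + 1) = 2 / (r - 2) := by
          rw [div_eq_div_iff hexp_ne (by linarith : r - 2 ≠ 0)]
          ring
        have hd : Real.sqrt M * (-t₀ ^ (-(r / 2) + 1) / (-(r / 2) + 1))
            = t₀ * (2 / (r - 2)) := by
          calc Real.sqrt M * (-t₀ ^ (-(r / 2) + 1) / (-(r / 2) + 1))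
              = (t₀ ^ (r / 2 : ℝ) * t₀ ^ (-(r / 2) + 1 : ℝ)) * ((-1) / (-(r / 2) + 1)) := by
                rw [hsqrtM]; ring
          _ = t₀ * (2 / (r - 2)) := by rw [h1, hq]
        rw [hc, hd] at hb
        exact hb
      have hfinal : t₀ + t₀ * (2 / (r - 2)) = r / (r - 2) * t₀ := by
        field_simp
        ring
      calc N ≤ t₀ + t₀ * (2 / (r - 2)) := by rw [hsplit]; exact add_le_add hp1 hp2
      _ = r / (r - 2) * t₀ := hfinal
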